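/- Let R be a ring with a homothetic datum (λ, ρ, s). Define the operation a ⋄ b = a·b + ρ(a) + λ(b) + s on R. Then ⋄ is associative and distributes over the heap bracket, i.e., a ⋄ (b − c + d) = a⋄b − a⋄c + a⋄d and (a − b + c) ⋄ d = a⋄d − b⋄d + c⋄d for all a, b, c, d ∈ R. -/
import Mathlib


/-- Given a homothetic datum `(λ, ρ, s)` on a ring `R`, the homothetic truss
multiplication `a ⋄ b = a·b + ρ(a) + λ(b) + s` is associative and distributes
over the heap bracket `[a,b,c] = a − b + c`. -/
theorem homothetic_truss_mul {R : Type*} [NonUnitalRing R]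
    (lam rho : R →+ R) (s : R)
    (hlam : ∀ a b : R, lam (a * b) = lam a * b)
    (hrho : ∀ a b : R, rho (a * b) = a * rho b)
    (hmid : ∀ a b : R, a * lam b = rho a * b)
    (hperm : ∀ a : R, rho (lam a) = lam (rho a))
    (hs : lam s = rho s)
    (hll : ∀ a : R, lam (lam a) = lam a + s * a)
    (hrr : ∀ a : R, rho (rho a) = rho a + a * s) :
    (∀ a b c : R,
      ((a * b + rho a + lam b + s) * c + rho (a * b + rho a + lam b + s) + lam c + s)
        = (a * (b * c + rho b + lam c + s) + rho a + lam (b * c + rho b + lam c + s) + s)) ∧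
    (∀ a b c d : R,
      a * (b - c + d) + rho a + lam (b - c + d) + s
        = (a * b + rho a + lam b + s) - (a * c + rho a + lam c + s)
            + (a * d + rho a + lam d + s)) ∧
    (∀ a b c d : R,
      (a - b + c) * d + rho (a - b + c) + lam d + s
        = (a * d + rho a + lam d + s) - (b * d + rho b + lam d + s)
            + (c * d + rho c + lam d + s)) := by
  refine ⟨fun a b c => ?_, fun a b c d => ?_, fun a b c d => ?_⟩
  · simp only [map_add, hlam, hrho, hperm, hll, hrr, mul_add, add_mul, mul_assoc, hmid, ← hs]
    abel
  · simp only [map_add, map_sub, mul_add, mul_sub]; abel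
  · simp only [map_add, map_sub, add_mul, sub_mul]; abel
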